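/- arXiv:1308.0505 — 2 statements merged into one kernel-verified Lean document; each statement's English description precedes it below -/
import Mathlib

section
/- Let n_k = ⌊k^δ⌋ with δ ∈ (1/2,1). Then lim_{k→∞} n_k/k = 0 and lim_{k→∞} √k/n_k = 0, and consequently, for every fixed ℓ ∈ ℕ₀, lim_{k→∞} (n_k·m_{ℓ,k})/k = σ(0)²/‖σ‖₂², where σ_i = σ(i/n_k), m_{ℓ,k} = ⌊(σ_ℓ²/Σ_{i=0}^{n_k−1} σ_i²)·(k − n_k)⌋ + 1 and ‖σ‖₂ = (∫₀¹ σ(t)² dt)^{1/2}. -/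
open MeasureTheory ProbabilityTheory Filter Set
open scoped ENNReal NNReal

noncomputable section

/-- Best `L∞`-approximation error of `f` on `[a,b]` by polynomials of degree at most `r`. -/
def polyDist (r : ℕ) (f : ℝ → ℝ) (a b : ℝ) : ℝ :=
  ⨅ p : {p : Polynomial ℝ // p.natDegree ≤ r},
    ⨆ s : Set.Icc a b, |f s - Polynomial.eval (s : ℝ) (p : Polynomial ℝ)|

/-- The stopping times `τ_{j,ε}` of consecutive maximal subintervals (starting at `a`)
on which `f` admits best polynomial approximation of degree at most `r` with error `≤ ε`. -/
def tauSeq (r : ℕ) (f : ℝ → ℝ) (a ε : ℝ) : ℕ → ℝ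
  | 0 => a
  | j + 1 => sInf {t : ℝ | tauSeq r f a ε j < t ∧ ε < polyDist r f (tauSeq r f a ε j) t}

/-- The pathwise minimal error `γ_m` of approximating `f` on `[a,b]` by splines of degree
at most `r` with `m - 1` free knots. -/
def gammaErr (r : ℕ) (f : ℝ → ℝ) (a b : ℝ) (m : ℕ) : ℝ :=
  sInf {ε : ℝ | 0 < ε ∧ b ≤ tauSeq r f a ε m}

/-- `W` is a standard one-dimensional Brownian motion under `P`. -/
structure IsBrownianMotion {Ω : Type*} [MeasurableSpace Ω] (P : Measure Ω)
    (W : ℝ → Ω → ℝ) : Prop where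
  measurable : ∀ t : ℝ, Measurable (W t)
  init : ∀ ω, W 0 ω = 0
  cont : ∀ᵐ ω ∂P, Continuous fun t => W t ω
  gauss_incr : ∀ s t : ℝ, 0 ≤ s → s ≤ t →
    Measure.map (fun ω => W t ω - W s ω) P = gaussianReal 0 (Real.toNNReal (t - s))
  indep_incr : ∀ (n : ℕ) (t : ℕ → ℝ), Monotone t → 0 ≤ t 0 →
    iIndepFun
      (fun i : Fin n => fun ω => W (t ((i : ℕ) + 1)) ω - W (t (i : ℕ)) ω) P

/-- The expectation `E(τ_{1,1})`. -/
def Etau {Ω : Type*} [MeasurableSpace Ω] (P : Measure Ω) (W : ℝ → Ω → ℝ) (r : ℕ) : ℝ≥0∞ :=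
  ∫⁻ ω, ENNReal.ofReal (tauSeq r (fun t => W t ω) 0 1 1) ∂P

/-- Outer expectation `E*` of a (not necessarily measurable) nonnegative quantity. -/
def outerExp {Ω : Type*} [MeasurableSpace Ω] (P : Measure Ω) (f : Ω → ℝ) : ℝ≥0∞ :=
  sInf {I : ℝ≥0∞ | ∃ g : Ω → ℝ≥0∞, Measurable g ∧ (∀ ω, ENNReal.ofReal (f ω) ≤ g ω) ∧
    I = ∫⁻ ω, g ω ∂P}

/-- `φ` is a polynomial spline of degree at most `r` on `[a,b]` with `m` pieces
(i.e. `m + 1` knots, `m - 1` of them free), in the sense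
`φ = Σ_{j=1}^{m} 1_{(t_{j-1}, t_j]} · π_j`. -/
def IsSpline (r m : ℕ) (a b : ℝ) (φ : ℝ → ℝ) : Prop :=
  ∃ (t : ℕ → ℝ) (p : ℕ → Polynomial ℝ),
    t 0 = a ∧ t m = b ∧ (∀ j < m, t j < t (j + 1)) ∧
    (∀ j, (p j).natDegree ≤ r) ∧
    ∀ j < m, ∀ s ∈ Set.Ioc (t j) (t (j + 1)), φ s = Polynomial.eval s (p j)


lemma riemann (g : ℝ → ℝ) (L : ℝ) (hL : 0 ≤ L)
    (hlip : ∀ x ∈ Icc (0:ℝ) 1, ∀ y ∈ Icc (0:ℝ) 1, |g x - g y| ≤ L * |x - y|)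
    (hcont : ContinuousOn g (Icc 0 1)) :
    Tendsto (fun N : ℕ => (∑ i ∈ Finset.range N, g (i / N)) / N) atTop
      (nhds (∫ t in (0:ℝ)..1, g t)) := by
  set I := ∫ t in (0:ℝ)..1, g t with hI
  rw [tendsto_iff_dist_tendsto_zero]
  have key : ∀ N : ℕ, 1 ≤ N →
      |(∑ i ∈ Finset.range N, g (i / N)) / N - I| ≤ L / N := by
    intro N hN
    have hN0 : (0:ℝ) < N := by exact_mod_cast hN
    set a : ℕ → ℝ := fun i => i / N with ha
    have hmem : ∀ i ≤ N, a i ∈ Icc (0:ℝ) 1 := by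
      intro i hi
      constructor
      · positivity
      · rw [div_le_one hN0]; exact_mod_cast hi
    have hsub : ∀ i < N, Icc (a i) (a (i+1)) ⊆ Icc (0:ℝ) 1 := by
      intro i hi
      apply Icc_subset_Icc (hmem i hi.le).1 (hmem (i+1) hi).2
    have hmono : ∀ i : ℕ, a i ≤ a (i+1) := by
      intro i
      simp only [ha]
      gcongr
      exact_mod_cast Nat.le_succ i
    have hint : ∀ i < N, IntervalIntegrable g volume (a i) (a (i+1)) := by
      intro i hi
      apply ContinuousOn.intervalIntegrable
      apply hcont.mono
      rw [uIcc_of_le (hmono i)]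
      exact hsub i hi
    have hIsum : I = ∑ i ∈ Finset.range N, ∫ t in (a i)..(a (i+1)), g t := by
      rw [intervalIntegral.sum_integral_adjacent_intervals hint]
      simp only [ha]
      norm_num [div_self hN0.ne']
      exact hI
    have hlen : ∀ i : ℕ, a (i+1) - a i = 1 / N := by
      intro i
      field_simp [ha]
      simp only [ha]
      rw [div_sub_div_same, div_mul_cancel₀ _ hN0.ne']
      norm_num
    have hsumform : (∑ i ∈ Finset.range N, g (i / N)) / N
        = ∑ i ∈ Finset.range N, (1 / N) * g (a i) := by
      rw [Finset.sum_div]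
      exact Finset.sum_congr rfl fun i _ => by rw [div_eq_mul_inv, one_div, mul_comm]
    rw [hsumform, hIsum, ← Finset.sum_sub_distrib]
    calc |∑ i ∈ Finset.range N, ((1 / N) * g (a i) - ∫ t in (a i)..(a (i+1)), g t)|
        ≤ ∑ i ∈ Finset.range N, |(1 / N) * g (a i) - ∫ t in (a i)..(a (i+1)), g t| :=
          Finset.abs_sum_le_sum_abs _ _
      _ ≤ ∑ i ∈ Finset.range N, L / N ^ 2 := by
          apply Finset.sum_le_sum
          intro i hi
          rw [Finset.mem_range] at hi
          have h1 : (1 / (N:ℝ)) * g (a i) = ∫ _ in (a i)..(a (i+1)), g (a i) := by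
            rw [intervalIntegral.integral_const, hlen i, smul_eq_mul]
          rw [h1, ← intervalIntegral.integral_sub (intervalIntegrable_const) (hint i hi)]
          have := intervalIntegral.norm_integral_le_of_norm_le_const
            (a := a i) (b := a (i+1)) (C := L / N) (f := fun t => g (a i) - g t) ?_
          · rw [Real.norm_eq_abs] at this
            refine this.trans ?_
            rw [hlen i, abs_of_nonneg (by positivity)]
            rw [div_mul_div_comm, mul_one, sq]
          · intro x hx
            rw [uIoc_of_le (hmono i)] at hx
            have hx' : x ∈ Icc (0:ℝ) 1 := hsub i hi ⟨hx.1.le, hx.2⟩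
            rw [Real.norm_eq_abs]
            have := hlip (a i) (hmem i hi.le) x hx'
            refine this.trans ?_
            have hxa : |a i - x| ≤ 1 / N := by
              rw [abs_sub_comm, abs_of_pos (by linarith [hx.1]), ]
              have := hx.2
              have := hlen i
              linarith
            calc L * |a i - x| ≤ L * (1/N) := by gcongr
              _ = L / N := by ring
      _ = L / N := by
          rw [Finset.sum_const, Finset.card_range, nsmul_eq_mul, sq]
          field_simp
  apply squeeze_zero' (g := fun N : ℕ => L / N)
  · filter_upwards with N using dist_nonneg
  · filter_upwards [eventually_ge_atTop 1] with N hN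
    rw [Real.dist_eq]
    exact key N hN
  · exact tendsto_const_div_atTop_nhds_zero_nat L


/-- `n_k = ⌊k^δ⌋` with `δ ∈ (1/2,1)` satisfies `n_k/k → 0` and `√k/n_k → 0`,
and for every fixed `ℓ`, `(n_k · m_{ℓ,k})/k → σ(0)²/‖σ‖₂²`. -/
theorem stmt0 (σ : ℝ → ℝ) (K : ℝ≥0) (hσLip : LipschitzOnWith K σ (Set.Icc 0 1))
    (hσpos : ∀ t ∈ Set.Icc (0 : ℝ) 1, 0 < |σ t|)
    (δ : ℝ) (hδ : δ ∈ Set.Ioo (1 / 2 : ℝ) 1)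
    (n : ℕ → ℕ) (hn : ∀ k : ℕ, n k = ⌊(k : ℝ) ^ δ⌋₊)
    (m : ℕ → ℕ → ℕ)
    (hm : ∀ ℓ k : ℕ, m ℓ k =
      ⌊σ ((ℓ : ℝ) / (n k : ℝ)) ^ 2 / (∑ i ∈ Finset.range (n k), σ ((i : ℝ) / (n k : ℝ)) ^ 2) *
        ((k : ℝ) - (n k : ℝ))⌋₊ + 1) :
    Tendsto (fun k : ℕ => (n k : ℝ) / (k : ℝ)) atTop (nhds 0) ∧
    Tendsto (fun k : ℕ => Real.sqrt (k : ℝ) / (n k : ℝ)) atTop (nhds 0) ∧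
    ∀ ℓ : ℕ, Tendsto (fun k : ℕ => (n k : ℝ) * (m ℓ k : ℝ) / (k : ℝ)) atTop
      (nhds (σ 0 ^ 2 / (∫ t in (0 : ℝ)..1, σ t ^ 2))) := by
  obtain ⟨hδ1, hδ2⟩ := hδ
  have hδ0 : (0:ℝ) < δ := by linarith
  -- n k → ∞
  have hn_top : Tendsto n atTop atTop := by
    have : Tendsto (fun k : ℕ => ⌊(k : ℝ) ^ δ⌋₊) atTop atTop :=
      tendsto_nat_floor_atTop.comp ((tendsto_rpow_atTop hδ0).comp tendsto_natCast_atTop_atTop)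
    exact this.congr fun k => (hn k).symm
  -- n k ≤ k
  have hnle : ∀ k, n k ≤ k := by
    intro k
    rw [hn]
    rcases Nat.eq_zero_or_pos k with h | h
    · simp [h, Real.zero_rpow hδ0.ne']
    · have h1 : (1:ℝ) ≤ (k:ℝ) := by exact_mod_cast h
      calc ⌊(k:ℝ) ^ δ⌋₊ ≤ ⌊(k:ℝ) ^ (1:ℝ)⌋₊ :=
            Nat.floor_le_floor (Real.rpow_le_rpow_of_exponent_le h1 hδ2.le)
        _ = k := by rw [Real.rpow_one, Nat.floor_natCast]
  -- part 1
  have h1 : Tendsto (fun k : ℕ => (n k : ℝ) / (k : ℝ)) atTop (nhds 0) := by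
    apply squeeze_zero' (g := fun k : ℕ => (k:ℝ) ^ (δ - 1))
    · filter_upwards with k using by positivity
    · filter_upwards [eventually_ge_atTop 1] with k hk
      have hk0 : (0:ℝ) < k := by exact_mod_cast hk
      have hfl : (n k : ℝ) ≤ (k:ℝ) ^ δ := by
        rw [hn]; exact Nat.floor_le (by positivity)
      calc (n k : ℝ) / k ≤ (k:ℝ) ^ δ / k := by gcongr
        _ = (k:ℝ) ^ (δ - 1) := by
            rw [Real.rpow_sub hk0, Real.rpow_one]
    · have := (tendsto_rpow_neg_atTop (y := 1 - δ) (by linarith)).comp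
        tendsto_natCast_atTop_atTop
      simpa [neg_sub, Function.comp_def] using this
  -- part 2
  have h2 : Tendsto (fun k : ℕ => Real.sqrt (k:ℝ) / (n k : ℝ)) atTop (nhds 0) := by
    apply squeeze_zero' (g := fun k : ℕ => 2 * (k:ℝ) ^ ((1:ℝ)/2 - δ))
    · filter_upwards with k using by positivity
    · filter_upwards [eventually_ge_atTop 1,
        (((tendsto_rpow_atTop hδ0).comp tendsto_natCast_atTop_atTop).eventually_ge_atTop 2)]
        with k hk hk2
      have hk0 : (0:ℝ) < k := by exact_mod_cast hk
      have hk2' : (2:ℝ) ≤ (k:ℝ) ^ δ := hk2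
      have hnk : (k:ℝ) ^ δ / 2 ≤ (n k : ℝ) := by
        rw [hn]
        have := Nat.sub_one_lt_floor ((k:ℝ) ^ δ)
        have : (k:ℝ) ^ δ - 1 ≤ (⌊(k:ℝ) ^ δ⌋₊ : ℝ) := this.le
        linarith
      have hnk0 : (0:ℝ) < (n k : ℝ) := lt_of_lt_of_le (by linarith) hnk
      calc Real.sqrt (k:ℝ) / (n k : ℝ) ≤ Real.sqrt (k:ℝ) / ((k:ℝ) ^ δ / 2) := by
            exact div_le_div_of_nonneg_left (Real.sqrt_nonneg _) (by linarith) hnk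
        _ = 2 * ((k:ℝ) ^ ((1:ℝ)/2) / (k:ℝ) ^ δ) := by
            rw [Real.sqrt_eq_rpow]; ring
        _ = 2 * (k:ℝ) ^ ((1:ℝ)/2 - δ) := by
            rw [Real.rpow_sub hk0]
    · have := (tendsto_rpow_neg_atTop (y := δ - 1/2) (by linarith)).comp
        tendsto_natCast_atTop_atTop
      have h0 : Tendsto (fun k : ℕ => (k:ℝ) ^ ((1:ℝ)/2 - δ)) atTop (nhds 0) := by
        simpa [neg_sub, Function.comp_def] using this
      simpa using h0.const_mul (2:ℝ)
  refine ⟨h1, h2, ?_⟩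
  -- part 3
  intro ℓ
  set g : ℝ → ℝ := fun t => σ t ^ 2 with hg
  set I : ℝ := ∫ t in (0:ℝ)..1, σ t ^ 2 with hIdef
  have hσcont : ContinuousOn σ (Icc 0 1) := hσLip.continuousOn
  have hgcont : ContinuousOn g (Icc 0 1) := hσcont.pow 2
  obtain ⟨M, hM⟩ := isCompact_Icc.exists_bound_of_continuousOn hσcont
  have hM0 : 0 ≤ M := le_trans (norm_nonneg _) (hM 0 ⟨le_refl 0, zero_le_one⟩)
  have hLnn : (0:ℝ) ≤ (K:ℝ) * (2 * M) := by positivity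
  have hlip : ∀ x ∈ Icc (0:ℝ) 1, ∀ y ∈ Icc (0:ℝ) 1, |g x - g y| ≤ ((K:ℝ) * (2 * M)) * |x - y| := by
    intro x hx y hy
    have hd : |σ x - σ y| ≤ (K:ℝ) * |x - y| := by
      have := hσLip.dist_le_mul x hx y hy
      simpa [Real.dist_eq] using this
    have hs : |σ x + σ y| ≤ 2 * M := by
      calc |σ x + σ y| ≤ |σ x| + |σ y| := abs_add_le _ _
        _ ≤ M + M := add_le_add (hM x hx) (hM y hy)
        _ = 2 * M := by ring
    calc |g x - g y| = |σ x - σ y| * |σ x + σ y| := by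
          rw [← abs_mul]; congr 1; simp only [hg]; ring
      _ ≤ ((K:ℝ) * |x - y|) * (2 * M) :=
          mul_le_mul hd hs (abs_nonneg _) (by positivity)
      _ = ((K:ℝ) * (2 * M)) * |x - y| := by ring
  have hRie := riemann g ((K:ℝ) * (2 * M)) hLnn hlip hgcont
  have hSn : Tendsto (fun k : ℕ =>
      (∑ i ∈ Finset.range (n k), σ ((i : ℝ) / (n k : ℝ)) ^ 2) / (n k : ℝ)) atTop (nhds I) :=
    hRie.comp hn_top
  have hgint : IntervalIntegrable g volume 0 1 :=
    ContinuousOn.intervalIntegrable (by rw [uIcc_of_le zero_le_one]; exact hgcont)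
  have hIpos : 0 < I := by
    apply intervalIntegral.intervalIntegral_pos_of_pos_on hgint ?_ zero_lt_one
    intro x hx
    have := hσpos x ⟨hx.1.le, hx.2.le⟩
    have hne : σ x ≠ 0 := by
      intro h; rw [h] at this; simp at this
    positivity
  -- A k → σ 0 ^ 2
  have hdiv : Tendsto (fun k : ℕ => (ℓ : ℝ) / (n k : ℝ)) atTop (nhds 0) :=
    tendsto_const_nhds.div_atTop (tendsto_natCast_atTop_atTop.comp hn_top)
  have hmem : ∀ᶠ k in atTop, (ℓ : ℝ) / (n k : ℝ) ∈ Icc (0:ℝ) 1 := by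
    filter_upwards [hn_top.eventually_ge_atTop (max ℓ 1)] with k hk
    have h1 : 1 ≤ n k := le_trans (le_max_right _ _) hk
    have h2 : ℓ ≤ n k := le_trans (le_max_left _ _) hk
    have hn0 : (0:ℝ) < (n k : ℝ) := by exact_mod_cast h1
    constructor
    · positivity
    · rw [div_le_one hn0]; exact_mod_cast h2
  have hA : Tendsto (fun k : ℕ => σ ((ℓ : ℝ) / (n k : ℝ)) ^ 2) atTop (nhds (σ 0 ^ 2)) := by
    have hw : Tendsto (fun k : ℕ => (ℓ : ℝ) / (n k : ℝ)) atTop (nhdsWithin 0 (Icc 0 1)) :=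
      tendsto_nhdsWithin_iff.mpr ⟨hdiv, hmem⟩
    have hc : ContinuousWithinAt σ (Icc 0 1) 0 := hσcont 0 ⟨le_refl 0, zero_le_one⟩
    exact (hc.tendsto.comp hw).pow 2
  -- abbreviations
  set S : ℕ → ℝ := fun k => ∑ i ∈ Finset.range (n k), σ ((i : ℝ) / (n k : ℝ)) ^ 2 with hS
  set A : ℕ → ℝ := fun k => σ ((ℓ : ℝ) / (n k : ℝ)) ^ 2 with hA'
  set a : ℕ → ℝ := fun k => A k / S k * ((k:ℝ) - (n k : ℝ)) with ha
  have hmform : ∀ k, (m ℓ k : ℝ) = (⌊a k⌋₊ : ℝ) + 1 := by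
    intro k
    rw [hm]
    push_cast
    rfl
  -- eventual facts
  have hev : ∀ᶠ k in atTop, 1 ≤ k ∧ 1 ≤ n k ∧ 0 < S k / (n k : ℝ) := by
    filter_upwards [eventually_ge_atTop 1, hn_top.eventually_ge_atTop 1,
      hSn.eventually (eventually_gt_nhds hIpos)] with k u v w
    exact ⟨u, v, w⟩
  -- limit of g1
  have hg1 : Tendsto (fun k : ℕ => (n k : ℝ) * a k / (k:ℝ)) atTop
      (nhds (σ 0 ^ 2 / I)) := by
    have hh : Tendsto (fun k : ℕ => A k / (S k / (n k : ℝ)) * (1 - (n k : ℝ) / (k:ℝ)))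
        atTop (nhds (σ 0 ^ 2 / I * (1 - 0))) :=
      (hA.div hSn hIpos.ne').mul (tendsto_const_nhds.sub h1)
    rw [sub_zero, mul_one] at hh
    apply hh.congr'
    filter_upwards [hev] with k ⟨hk1, hnk1, hSpos⟩
    have hk0 : (0:ℝ) < (k:ℝ) := by exact_mod_cast hk1
    have hn0 : (0:ℝ) < (n k : ℝ) := by exact_mod_cast hnk1
    have hS0 : S k ≠ 0 := by
      intro h
      rw [h] at hSpos
      simp at hSpos
    simp only [ha]
    field_simp
  have hg2 : Tendsto (fun k : ℕ => (n k : ℝ) * a k / (k:ℝ) + (n k : ℝ) / (k:ℝ)) atTop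
      (nhds (σ 0 ^ 2 / I)) := by
    have := hg1.add h1
    simpa using this
  -- squeeze
  apply tendsto_of_tendsto_of_tendsto_of_le_of_le' hg1 hg2
  · filter_upwards [hev] with k ⟨hk1, hnk1, hSpos⟩
    have hk0 : (0:ℝ) < (k:ℝ) := by exact_mod_cast hk1
    have hn0 : (0:ℝ) ≤ (n k : ℝ) := by positivity
    have hlt : a k ≤ (⌊a k⌋₊ : ℝ) + 1 := (Nat.lt_floor_add_one _).le
    rw [hmform]
    gcongr
  · filter_upwards [hev] with k ⟨hk1, hnk1, hSpos⟩
    have hk0 : (0:ℝ) < (k:ℝ) := by exact_mod_cast hk1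
    have hn0 : (0:ℝ) < (n k : ℝ) := by exact_mod_cast hnk1
    have hS0 : 0 < S k := by
      by_contra h
      push_neg at h
      have : S k / (n k : ℝ) ≤ 0 := div_nonpos_of_nonpos_of_nonneg h hn0.le
      linarith
    have hann : 0 ≤ a k := by
      have hkn : (n k : ℝ) ≤ (k:ℝ) := by exact_mod_cast hnle k
      have : 0 ≤ A k / S k := by positivity
      simp only [ha]
      apply mul_nonneg this (by linarith)
    have hfl : (⌊a k⌋₊ : ℝ) ≤ a k := Nat.floor_le hann
    rw [hmform]
    calc (n k : ℝ) * ((⌊a k⌋₊ : ℝ) + 1) / (k:ℝ) ≤ (n k : ℝ) * (a k + 1) / (k:ℝ) := by gcongr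
      _ = (n k : ℝ) * a k / (k:ℝ) + (n k : ℝ) / (k:ℝ) := by ring


end
end

section
/- For every c > 0 and every q ≥ 1, lim_{k→∞} n_k^{q+2} · Σ_{ℓ=0}^{n_k−1} exp(−2·c·m_{ℓ,k}) = 0. -/
open MeasureTheory ProbabilityTheory Filter Set
open scoped ENNReal NNReal

noncomputable section

set_option maxHeartbeats 1000000

/-- for every `c > 0` and `q ≥ 1`,
`n_k^{q+2} · Σ_{ℓ=0}^{n_k−1} exp(−2·c·m_{ℓ,k}) → 0`. -/
theorem stmt1 (σ : ℝ → ℝ) (K : ℝ≥0) (hσLip : LipschitzOnWith K σ (Set.Icc 0 1))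
    (hσpos : ∀ t ∈ Set.Icc (0 : ℝ) 1, 0 < |σ t|)
    (δ : ℝ) (hδ : δ ∈ Set.Ioo (1 / 2 : ℝ) 1)
    (n : ℕ → ℕ) (hn : ∀ k : ℕ, n k = ⌊(k : ℝ) ^ δ⌋₊)
    (m : ℕ → ℕ → ℕ)
    (hm : ∀ ℓ k : ℕ, m ℓ k =
      ⌊σ ((ℓ : ℝ) / (n k : ℝ)) ^ 2 / (∑ i ∈ Finset.range (n k), σ ((i : ℝ) / (n k : ℝ)) ^ 2) *
        ((k : ℝ) - (n k : ℝ))⌋₊ + 1)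
    (c : ℝ) (hc : 0 < c) (q : ℝ) (hq : 1 ≤ q) :
    Tendsto (fun k : ℕ =>
        (n k : ℝ) ^ (q + 2) * ∑ ℓ ∈ Finset.range (n k), Real.exp (-2 * c * (m ℓ k : ℝ)))
      atTop (nhds 0) := by
  obtain ⟨hδ1, hδ2⟩ := hδ
  have hδ0 : 0 < δ := by linarith
  have hcont : ContinuousOn (fun t => σ t ^ 2) (Set.Icc (0:ℝ) 1) :=
    hσLip.continuousOn.pow 2
  obtain ⟨t₀, ht₀, hmin⟩ := isCompact_Icc.exists_isMinOn (Set.nonempty_Icc.2 zero_le_one) hcont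
  obtain ⟨t₁, ht₁, hmax⟩ := isCompact_Icc.exists_isMaxOn (Set.nonempty_Icc.2 zero_le_one) hcont
  set a : ℝ := σ t₀ ^ 2 with ha
  set b : ℝ := σ t₁ ^ 2 with hb
  have hapos : 0 < a := by
    have h := hσpos t₀ ht₀
    calc (0:ℝ) < |σ t₀| ^ 2 := pow_pos h 2
    _ = a := sq_abs _
  have hab : a ≤ b := hmax ht₀
  have hbpos : 0 < b := lt_of_lt_of_le hapos hab
  -- the dominating sequence
  have hb' : 0 < c * a / b := by positivity
  have key : Tendsto (fun k : ℕ =>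
      (k : ℝ) ^ (δ * (q + 3)) * Real.exp (-(c * a / b) * (k : ℝ) ^ (1 - δ))) atTop (nhds 0) := by
    have h1 : Tendsto (fun k : ℕ => (k : ℝ) ^ (1 - δ)) atTop atTop :=
      (tendsto_rpow_atTop (by linarith)).comp tendsto_natCast_atTop_atTop
    have h2 := (tendsto_rpow_mul_exp_neg_mul_atTop_nhds_zero (δ * (q + 3) / (1 - δ))
      (c * a / b) hb').comp h1
    apply h2.congr'
    filter_upwards [eventually_ge_atTop 1] with k hk
    have hk0 : (0:ℝ) ≤ (k:ℝ) := by positivity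
    simp only [Function.comp_apply]
    congr 1
    rw [← Real.rpow_mul hk0]
    congr 1
    rw [mul_comm (1-δ), div_mul_cancel₀ _ (by linarith : (1:ℝ)-δ ≠ 0)]
  apply squeeze_zero' (g := fun k : ℕ =>
      (k : ℝ) ^ (δ * (q + 3)) * Real.exp (-(c * a / b) * (k : ℝ) ^ (1 - δ))) ?_ ?_ key
  · filter_upwards with k
    have : ∀ ℓ ∈ Finset.range (n k), (0:ℝ) ≤ Real.exp (-2 * c * (m ℓ k : ℝ)) :=
      fun ℓ _ => (Real.exp_pos _).le
    positivity
  · have hsmall : Tendsto (fun k : ℕ => (k : ℝ) ^ (-(1 - δ))) atTop (nhds 0) :=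
      (tendsto_rpow_neg_atTop (by linarith : (0:ℝ) < 1 - δ)).comp tendsto_natCast_atTop_atTop
    filter_upwards [hsmall.eventually_le_const (by norm_num : (0:ℝ) < 1/2),
      eventually_ge_atTop 1] with k hhalf hk1
    have hkR : (1:ℝ) ≤ (k:ℝ) := by exact_mod_cast hk1
    have hkpos : (0:ℝ) < (k:ℝ) := by linarith
    have hnle : (n k : ℝ) ≤ (k:ℝ) ^ δ := by
      rw [hn]; exact Nat.floor_le (by positivity)
    have hn1 : 1 ≤ n k := by
      rw [hn]
      exact Nat.le_floor (by exact_mod_cast Real.one_le_rpow hkR hδ0.le)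
    have hnpos : (0:ℝ) < (n k : ℝ) := by exact_mod_cast hn1
    have hkhalf : (k:ℝ) ^ δ ≤ (k:ℝ) / 2 := by
      have e : (k:ℝ) ^ δ = (k:ℝ) ^ (-(1-δ)) * (k:ℝ) := by
        rw [← Real.rpow_add_one hkpos.ne' (-(1-δ))]
        congr 1
        ring
      rw [e]
      have := mul_le_mul_of_nonneg_right hhalf hkpos.le
      linarith
    have hkn : (k:ℝ) / 2 ≤ (k:ℝ) - (n k : ℝ) := by linarith
    set E := Real.exp (-(c * a / b) * (k:ℝ) ^ (1 - δ)) with hE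
    have hmem : ∀ i ∈ Finset.range (n k), ((i:ℝ) / (n k : ℝ)) ∈ Set.Icc (0:ℝ) 1 := by
      intro i hi
      refine ⟨by positivity, ?_⟩
      rw [div_le_one hnpos]
      exact_mod_cast (Finset.mem_range.1 hi).le
    set S := ∑ i ∈ Finset.range (n k), σ ((i:ℝ) / (n k : ℝ)) ^ 2 with hS
    have hSpos : 0 < S := by
      refine Finset.sum_pos (fun i hi => ?_) ⟨0, Finset.mem_range.2 hn1⟩
      have h := hσpos _ (hmem i hi)
      calc (0:ℝ) < |σ ((i:ℝ)/(n k:ℝ))| ^ 2 := pow_pos h 2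
      _ = _ := sq_abs _
    have hSle : S ≤ (n k : ℝ) * b := by
      calc S ≤ Finset.card (Finset.range (n k)) • b :=
            Finset.sum_le_card_nsmul _ _ _ (fun i hi => hmax (hmem i hi))
      _ = (n k : ℝ) * b := by rw [Finset.card_range, nsmul_eq_mul]
    have hmlow : ∀ ℓ ∈ Finset.range (n k),
        a / (2*b) * (k:ℝ) ^ (1-δ) ≤ (m ℓ k : ℝ) := by
      intro ℓ hℓ
      have hnum : a ≤ σ ((ℓ:ℝ) / (n k : ℝ)) ^ 2 := hmin (hmem ℓ hℓ)
      have hR : a / ((n k : ℝ) * b) ≤ σ ((ℓ:ℝ) / (n k : ℝ)) ^ 2 / S := by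
        gcongr
      have hfloor : σ ((ℓ:ℝ) / (n k : ℝ)) ^ 2 / S * ((k:ℝ) - (n k : ℝ)) < (m ℓ k : ℝ) := by
        rw [hm]; push_cast; exact Nat.lt_floor_add_one _
      have e1 : (k:ℝ) ^ (1-δ) = (k:ℝ) / (k:ℝ) ^ δ := by
        rw [Real.rpow_sub hkpos, Real.rpow_one]
      have e2 : a / (2*b) * ((k:ℝ) ^ (1-δ)) = a / ((k:ℝ)^δ * b) * ((k:ℝ)/2) := by
        rw [e1]
        have hkd : (0:ℝ) < (k:ℝ) ^ δ := by positivity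
        field_simp
      have i1 : a / ((k:ℝ)^δ * b) * ((k:ℝ)/2) ≤ a / ((n k : ℝ) * b) * ((k:ℝ)/2) := by
        gcongr
      have i2 : a / ((n k : ℝ) * b) * ((k:ℝ)/2) ≤
          σ ((ℓ:ℝ) / (n k : ℝ)) ^ 2 / S * ((k:ℝ) - (n k : ℝ)) :=
        mul_le_mul hR hkn (by positivity) (by positivity)
      linarith
    have hsum : ∑ ℓ ∈ Finset.range (n k), Real.exp (-2 * c * (m ℓ k : ℝ)) ≤ (n k : ℝ) * E := by
      calc ∑ ℓ ∈ Finset.range (n k), Real.exp (-2 * c * (m ℓ k : ℝ))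
          ≤ ∑ _ℓ ∈ Finset.range (n k), E := by
            refine Finset.sum_le_sum (fun ℓ hℓ => ?_)
            rw [hE]
            apply Real.exp_le_exp.2
            have h1 := hmlow ℓ hℓ
            have h2 := mul_le_mul_of_nonneg_left h1 (by positivity : (0:ℝ) ≤ 2*c)
            have e3 : 2*c*(a/(2*b) * (k:ℝ)^(1-δ)) = c*a/b*(k:ℝ)^(1-δ) := by
              field_simp
            nlinarith
      _ = (n k : ℝ) * E := by
            rw [Finset.sum_const, Finset.card_range, nsmul_eq_mul]
    have hE0 : 0 ≤ E := (Real.exp_pos _).le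
    calc (n k : ℝ) ^ (q + 2) * ∑ ℓ ∈ Finset.range (n k), Real.exp (-2 * c * (m ℓ k : ℝ))
        ≤ (n k : ℝ) ^ (q + 2) * ((n k : ℝ) * E) := by
          apply mul_le_mul_of_nonneg_left hsum (by positivity)
    _ ≤ ((k:ℝ) ^ δ) ^ (q + 2) * ((k:ℝ) ^ δ * E) :=
          mul_le_mul (Real.rpow_le_rpow hnpos.le hnle (by linarith))
            (mul_le_mul_of_nonneg_right hnle hE0) (by positivity) (by positivity)
    _ = (k : ℝ) ^ (δ * (q + 3)) * E := by
          rw [← Real.rpow_mul hkpos.le, ← mul_assoc, ← Real.rpow_add hkpos]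
          congr 2
          ring


end
end
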